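/- For nonnegative integers i ≥ j and r ≥ p ≥ 0, the r-Stirling numbers of the second kind satisfy {i+r, j+r}_r = Σ_{k=j}^{i} C(k,j) {i+p, k+p}_p · (r-p)(r-p-1)⋯(r-p-(k-j)+1), where the last factor is the falling factorial (r-p)_{k-j}. -/
import Mathlib


open Finset

/-- The `r`-Stirling numbers of the second kind: `rS2 r i j = {i+r, j+r}_r`,
with generating function `∑_i {i+r, j+r}_r t^i/i! = (1/j!) e^{rt}(e^t-1)^j`. -/
def rS2 (r : ℕ) : ℕ → ℕ → ℕ
  | 0, 0 => 1
  | 0, _ + 1 => 0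
  | i + 1, 0 => r * rS2 r i 0
  | i + 1, j + 1 => (j + 1 + r) * rS2 r i (j + 1) + rS2 r i j

lemma rS2_zero_of_lt (r : ℕ) : ∀ i j, i < j → rS2 r i j = 0 := by
  intro i
  induction i with
  | zero =>
    intro j hj
    cases j with
    | zero => omega
    | succ j => simp [rS2]
  | succ i ih =>
    intro j hj
    cases j with
    | zero => omega
    | succ j => simp [rS2, ih j (by omega), ih (j + 1) (by omega)]

lemma rS2_succ (q i k : ℕ) :
    rS2 q (i + 1) k = (k + q) * rS2 q i k + (if k = 0 then 0 else rS2 q i (k - 1)) := by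
  cases k <;> simp [rS2]

lemma keyA (r p j k : ℕ) (hpr : p ≤ r) (hjk : j ≤ k) :
    (k + p) * (r - p).descFactorial (k - j) + (r - p).descFactorial (k - j + 1)
      = (j + r) * (r - p).descFactorial (k - j) := by
  rw [Nat.descFactorial_succ]
  rcases le_or_gt (k - j) (r - p) with h | h
  · rw [← Nat.add_mul]
    congr 1
    omega
  · rw [Nat.descFactorial_eq_zero_iff_lt.mpr h]
    ring

lemma choose_succ_ite (k j : ℕ) :
    (k + 1).choose j = k.choose j + (if j = 0 then 0 else k.choose (j - 1)) := by
  cases j with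
  | zero => simp
  | succ m => simp [Nat.choose_succ_succ, Nat.add_comm]

lemma main_lemma (r p : ℕ) (hpr : p ≤ r) : ∀ i j,
    rS2 r i j = ∑ k ∈ range (i + 1),
      k.choose j * rS2 p i k * (r - p).descFactorial (k - j) := by
  intro i
  induction i with
  | zero =>
    intro j
    cases j <;> simp [rS2]
  | succ i ih =>
    intro j
    have step : ∑ k ∈ range (i + 2),
        k.choose j * rS2 p (i + 1) k * (r - p).descFactorial (k - j)
        = (j + r) * ∑ k ∈ range (i + 1),
            k.choose j * rS2 p i k * (r - p).descFactorial (k - j)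
          + (if j = 0 then 0 else ∑ k ∈ range (i + 1),
              k.choose (j - 1) * rS2 p i k * (r - p).descFactorial (k - (j - 1))) := by
      have expand : ∀ k ∈ range (i + 2),
          k.choose j * rS2 p (i + 1) k * (r - p).descFactorial (k - j)
          = k.choose j * ((k + p) * rS2 p i k) * (r - p).descFactorial (k - j)
            + k.choose j * (if k = 0 then 0 else rS2 p i (k - 1)) *
                (r - p).descFactorial (k - j) := by
        intro k _
        rw [rS2_succ, Nat.mul_add, Nat.add_mul]
      rw [Finset.sum_congr rfl expand, Finset.sum_add_distrib]
      -- first sum: drop the k = i+1 term (rS2 p i (i+1) = 0)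
      have h1 : ∑ k ∈ range (i + 2),
          k.choose j * ((k + p) * rS2 p i k) * (r - p).descFactorial (k - j)
          = ∑ k ∈ range (i + 1),
          k.choose j * ((k + p) * rS2 p i k) * (r - p).descFactorial (k - j) := by
        rw [Finset.sum_range_succ, rS2_zero_of_lt p i (i + 1) (by omega)]
        simp
      -- second sum: reindex
      have h2 : ∑ k ∈ range (i + 2),
          k.choose j * (if k = 0 then 0 else rS2 p i (k - 1)) *
            (r - p).descFactorial (k - j)
          = ∑ k ∈ range (i + 1),
          (k + 1).choose j * rS2 p i k * (r - p).descFactorial (k + 1 - j) := by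
        rw [Finset.sum_range_succ']
        simp
      rw [h1, h2]
      -- split the reindexed sum via Pascal
      have h3 : ∀ k ∈ range (i + 1),
          (k + 1).choose j * rS2 p i k * (r - p).descFactorial (k + 1 - j)
          = k.choose j * rS2 p i k * (r - p).descFactorial (k + 1 - j)
            + (if j = 0 then 0 else
                k.choose (j - 1) * rS2 p i k * (r - p).descFactorial (k - (j - 1))) := by
        intro k _
        rw [choose_succ_ite]
        rcases Nat.eq_zero_or_pos j with hj | hj
        · simp [hj]
        · have hj' : ¬ j = 0 := by omega
          simp only [if_neg hj']
          have : k + 1 - j = k - (j - 1) := by omega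
          rw [this, Nat.add_mul, Nat.add_mul]
      rw [Finset.sum_congr rfl h3, Finset.sum_add_distrib]
      have h4 : (∑ k ∈ range (i + 1), if j = 0 then 0 else
            k.choose (j - 1) * rS2 p i k * (r - p).descFactorial (k - (j - 1)))
          = (if j = 0 then 0 else ∑ k ∈ range (i + 1),
            k.choose (j - 1) * rS2 p i k * (r - p).descFactorial (k - (j - 1))) := by
        split <;> simp
      rw [h4, ← add_assoc]
      congr 1
      -- combine the two matching sums pointwise with keyA
      rw [Finset.mul_sum, ← Finset.sum_add_distrib]
      apply Finset.sum_congr rfl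
      intro k _
      rcases le_or_gt j k with hjk | hjk
      · have hk1 : k + 1 - j = k - j + 1 := by omega
        rw [hk1]
        have := keyA r p j k hpr hjk
        calc k.choose j * ((k + p) * rS2 p i k) * (r - p).descFactorial (k - j)
              + k.choose j * rS2 p i k * (r - p).descFactorial (k - j + 1)
            = k.choose j * rS2 p i k *
                ((k + p) * (r - p).descFactorial (k - j)
                  + (r - p).descFactorial (k - j + 1)) := by ring
          _ = k.choose j * rS2 p i k * ((j + r) * (r - p).descFactorial (k - j)) := by
              rw [this]
          _ = (j + r) * (k.choose j * rS2 p i k * (r - p).descFactorial (k - j)) := by ring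
      · rw [Nat.choose_eq_zero_of_lt hjk]
        ring
    rw [step, rS2_succ r i j, ih j]
    congr 1
    split
    · rfl
    · rw [ih (j - 1)]

theorem rStirlingSecond_change_of_base (i j r p : ℕ) (hij : j ≤ i) (hpr : p ≤ r) :
    rS2 r i j =
      ∑ k ∈ Finset.Icc j i, k.choose j * rS2 p i k * (r - p).descFactorial (k - j) := by
  rw [main_lemma r p hpr i j]
  symm
  apply Finset.sum_subset
  · intro k hk
    simp only [mem_Icc, mem_range] at *
    omega
  · intro k hk hk2
    simp only [mem_Icc, mem_range] at hk hk2
    have hkj : k < j := by omega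
    simp [Nat.choose_eq_zero_of_lt hkj]
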